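/- Let p, q : Fin m → (Fin 3 → ℝ) be tuples of points in ℝ³ such that the linear span of the points p i is a proper subspace of ℝ³. If there exists an orthogonal matrix A : Matrix (Fin 3) (Fin 3) ℝ (Aᵀ * A = 1) with A.mulVec (p i) = q i for all i, then there also exists a special orthogonal matrix R (Rᵀ * R = 1 and det R = 1) with R.mulVec (p i) = q i for all i. -/

import Mathlib

open Matrix

/-- If the points `p i` span a proper subspace of `ℝ³` and an orthogonal matrix
maps `p` to `q`, then a special orthogonal matrix can also be chosen. -/
theorem exists_specialOrthogonal_of_orthogonal_of_span_ne_top {m : ℕ}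
    (p q : Fin m → (Fin 3 → ℝ))
    (hspan : Submodule.span ℝ (Set.range p) ≠ ⊤)
    (h : ∃ A : Matrix (Fin 3) (Fin 3) ℝ, Aᵀ * A = 1 ∧ ∀ i, A.mulVec (p i) = q i) :
    ∃ R : Matrix (Fin 3) (Fin 3) ℝ, Rᵀ * R = 1 ∧ R.det = 1 ∧
      ∀ i, R.mulVec (p i) = q i := by
  obtain ⟨A, hA, hAp⟩ := h
  have hdet2 : A.det * A.det = 1 := by
    have := congrArg Matrix.det hA
    rwa [Matrix.det_mul, Matrix.det_transpose, Matrix.det_one] at this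
  rcases mul_self_eq_one_iff.mp hdet2 with h1 | h1
  · exact ⟨A, hA, h1, hAp⟩
  -- find unit vector orthogonal to span of p
  set K : Submodule ℝ (EuclideanSpace ℝ (Fin 3)) :=
    Submodule.span ℝ (Set.range fun i => (WithLp.toLp 2 (p i) : EuclideanSpace ℝ (Fin 3))) with hK
  have hKne : K ≠ ⊤ := by
    intro htop; apply hspan
    have hm := congrArg (Submodule.map (WithLp.linearEquiv 2 ℝ (Fin 3 → ℝ)).toLinearMap) htop
    rw [hK, Submodule.map_span, Submodule.map_top] at hm
    simpa [← Set.range_comp, Function.comp_def] using hm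
  have hbot : Kᗮ ≠ ⊥ := fun hb => hKne (Submodule.orthogonal_eq_bot_iff.mp hb)
  obtain ⟨v, hvK, hv0⟩ := Submodule.exists_mem_ne_zero_of_ne_bot hbot
  set w : Fin 3 → ℝ := WithLp.ofLp (‖v‖⁻¹ • v : EuclideanSpace ℝ (Fin 3)) with hw
  have hinner : ∀ x y : EuclideanSpace ℝ (Fin 3),
      (inner ℝ x y : ℝ) = (WithLp.ofLp x : Fin 3 → ℝ) ⬝ᵥ (WithLp.ofLp y : Fin 3 → ℝ) := by
    intro x y
    simp [PiLp.inner_apply, dotProduct, RCLike.inner_apply, mul_comm]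
  have hww : w ⬝ᵥ w = 1 := by
    rw [← hinner]
    rw [real_inner_smul_left, real_inner_smul_right, real_inner_self_eq_norm_sq]
    field_simp [norm_ne_zero_iff.mpr hv0]
  have hwp : ∀ i, w ⬝ᵥ p i = 0 := by
    intro i
    have hmem : (WithLp.toLp 2 (p i) : EuclideanSpace ℝ (Fin 3)) ∈ K := Submodule.subset_span ⟨i, rfl⟩
    rw [← hinner]
    rw [real_inner_smul_left, real_inner_comm,
      (Submodule.mem_orthogonal K v).mp hvK _ hmem, mul_zero]
  have h3 : w 0 * w 0 + w 1 * w 1 + w 2 * w 2 = 1 := by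
    simpa [dotProduct, Fin.sum_univ_three] using hww
  -- Householder reflection
  set S : Matrix (Fin 3) (Fin 3) ℝ := 1 + replicateCol Unit ((-2 : ℝ) • w) * replicateRow Unit w with hS
  have hSapp : ∀ i j, S i j = (if i = j then (1:ℝ) else 0) + (-2 * w i) * w j := by
    intro i j
    simp [hS, Matrix.mul_apply, Matrix.one_apply, Matrix.replicateCol_apply, Matrix.replicateRow_apply]
  have hSsymm : Sᵀ = S := by
    ext i j
    rw [Matrix.transpose_apply, hSapp, hSapp]
    rcases eq_or_ne i j with rfl | hij
    · ring
    · simp [hij, Ne.symm hij]; ring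
  have hSS : S * S = 1 := by
    ext i j
    rw [Matrix.mul_apply, Fin.sum_univ_three]
    simp only [hSapp, Matrix.one_apply]
    fin_cases i <;> fin_cases j <;> simp <;>
      first
      | linear_combination (4 * w 0 * w 0) * h3
      | linear_combination (4 * w 0 * w 1) * h3
      | linear_combination (4 * w 0 * w 2) * h3
      | linear_combination (4 * w 1 * w 0) * h3
      | linear_combination (4 * w 1 * w 1) * h3
      | linear_combination (4 * w 1 * w 2) * h3
      | linear_combination (4 * w 2 * w 0) * h3
      | linear_combination (4 * w 2 * w 1) * h3
      | linear_combination (4 * w 2 * w 2) * h3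
  have hSdet : S.det = -1 := by
    rw [hS, det_one_add_replicateCol_mul_replicateRow]
    have : w ⬝ᵥ ((-2 : ℝ) • w) = -2 := by
      rw [dotProduct_smul, hww]; norm_num
    rw [this]; norm_num
  have hSvec : ∀ i, S.mulVec (p i) = p i := by
    intro i
    ext k
    rw [Matrix.mulVec, dotProduct, Fin.sum_univ_three]
    simp only [hSapp]
    have := hwp i
    rw [dotProduct, Fin.sum_univ_three] at this
    fin_cases k <;> simp <;>
      first
      | linear_combination (-2 * w 0) * this
      | linear_combination (-2 * w 1) * this
      | linear_combination (-2 * w 2) * this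
  refine ⟨A * S, ?_, ?_, ?_⟩
  · rw [Matrix.transpose_mul, Matrix.mul_assoc, ← Matrix.mul_assoc Aᵀ, hA, Matrix.one_mul,
      hSsymm, hSS]
  · rw [Matrix.det_mul, h1, hSdet]; norm_num
  · intro i
    rw [← Matrix.mulVec_mulVec, hSvec, hAp]
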